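/- For t ≥ 0 and |ξ| > 4, setting Ξ = √(1 - 4/|ξ|²), λ₊ = -2/(1+Ξ), λ₋ = -(1+Ξ)|ξ|²/2, the quantity m₁ = (e^{tλ₋} + e^{tλ₊})/2 + (e^{tλ₋} - e^{tλ₊})/(2Ξ) satisfies |m₁| ≤ 2 e^{-t|ξ|²/2} + 3 e^{-t}/(1 + |ξ|²). -/

import Mathlib

set_option maxHeartbeats 1600000 in
/-- For t ≥ 0 and |ξ| > 4, with Ξ = √(1-4/|ξ|²), λ₊ = -2/(1+Ξ), λ₋ = -(1+Ξ)|ξ|²/2,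
the quantity m₁ = (e^{tλ₋}+e^{tλ₊})/2 + (e^{tλ₋}-e^{tλ₊})/(2Ξ) satisfies
|m₁| ≤ 2e^{-t|ξ|²/2} + 3e^{-t}/(1+|ξ|²). -/
theorem stmt3 (t : ℝ) (ht : 0 ≤ t) (ξ : EuclideanSpace ℝ (Fin 3)) (hξ : 4 < ‖ξ‖)
    (Ξ lp lm : ℝ) (hΞ : Ξ = Real.sqrt (1 - 4 / ‖ξ‖ ^ 2))
    (hlp : lp = -2 / (1 + Ξ)) (hlm : lm = -((1 + Ξ) * ‖ξ‖ ^ 2) / 2) :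
    |(Real.exp (t * lm) + Real.exp (t * lp)) / 2
      + (Real.exp (t * lm) - Real.exp (t * lp)) / (2 * Ξ)|
      ≤ 2 * Real.exp (-(t * ‖ξ‖ ^ 2) / 2) + 3 * Real.exp (-t) / (1 + ‖ξ‖ ^ 2) := by
  set n := ‖ξ‖ with hn
  have hn2 : (16:ℝ) < n ^ 2 := by nlinarith
  have hn2pos : (0:ℝ) < n ^ 2 := by linarith
  have h4 : 4 / n ^ 2 ≤ 1 / 4 := by
    rw [div_le_div_iff₀ hn2pos (by norm_num)]; nlinarith
  have h4nn : 0 ≤ 4 / n ^ 2 := by positivity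
  have hΞnn : 0 ≤ Ξ := hΞ ▸ Real.sqrt_nonneg _
  have hΞsq : Ξ ^ 2 = 1 - 4 / n ^ 2 := by
    rw [hΞ, Real.sq_sqrt (by linarith)]
  have hΞ1 : Ξ ≤ 1 := by nlinarith
  have hΞ34 : 3 / 4 ≤ Ξ := by nlinarith
  have hΞpos : (0:ℝ) < Ξ := by linarith
  have h1Ξ : (0:ℝ) < 1 + Ξ := by linarith
  set Em := Real.exp (t * lm) with hEm'
  set Ep := Real.exp (t * lp) with hEp'
  set E1 := Real.exp (-(t * n ^ 2) / 2) with hE1'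
  set E2 := Real.exp (-t) with hE2'
  have hEmpos : 0 < Em := Real.exp_pos _
  have hEppos : 0 < Ep := Real.exp_pos _
  have hE1pos : 0 < E1 := Real.exp_pos _
  have hE2pos : 0 < E2 := Real.exp_pos _
  have hEm : Em ≤ E1 := by
    apply Real.exp_le_exp.2
    rw [hlm]
    nlinarith [mul_nonneg (mul_nonneg ht hΞnn) hn2pos.le]
  have hEp : Ep ≤ E2 := by
    apply Real.exp_le_exp.2
    rw [hlp, mul_div_assoc', div_le_iff₀ h1Ξ]; nlinarith
  clear hEm' hEp' hE1' hE2' hΞ hlm hlp hn hξ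
  clear_value Em Ep E1 E2 n
  clear ξ
  have key : Ξ ^ 2 * n ^ 2 = n ^ 2 - 4 := by
    rw [hΞsq, sub_mul, one_mul, div_mul_cancel₀ (4:ℝ) hn2pos.ne']
  have hid : (Em + Ep) / 2 + (Em - Ep) / (2 * Ξ)
      = ((1 + Ξ) * Em + (Ξ - 1) * Ep) / (2 * Ξ) := by
    field_simp; ring
  rw [hid]
  have habs : |((1 + Ξ) * Em + (Ξ - 1) * Ep) / (2 * Ξ)|
      ≤ ((1 + Ξ) * Em + (1 - Ξ) * Ep) / (2 * Ξ) := by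
    rw [abs_div, abs_of_pos (by linarith : (0:ℝ) < 2 * Ξ)]
    apply div_le_div_of_nonneg_right ?_ (by linarith)
    rw [abs_le]
    constructor <;> nlinarith
  refine habs.trans ?_
  rw [add_div]
  have piece1 : (1 + Ξ) * Em / (2 * Ξ) ≤ 2 * E1 := by
    rw [div_le_iff₀ (by linarith : (0:ℝ) < 2 * Ξ)]
    nlinarith [mul_nonneg (sub_nonneg.2 hEm) (le_of_lt h1Ξ),
      mul_nonneg (by linarith : (0:ℝ) ≤ 4 * Ξ - 2) hE1pos.le]
  have h1 : (1 - Ξ) * (1 + Ξ) * n ^ 2 = 4 := by linear_combination -key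
  have h2 : (1 - Ξ) * n ^ 2 ≤ 16 / 7 := by
    nlinarith [mul_nonneg (mul_nonneg (by linarith : (0:ℝ) ≤ 1 - Ξ) hn2pos.le)
      (by linarith : (0:ℝ) ≤ Ξ - 3 / 4)]
  have h3 : (1 - Ξ) ≤ 1 / 7 := by
    nlinarith [mul_nonneg (by linarith : (0:ℝ) ≤ 1 - Ξ)
      (by linarith : (0:ℝ) ≤ n ^ 2 - 16)]
  have hcoef : (1 - Ξ) * (1 + n ^ 2) ≤ 6 * Ξ := by nlinarith
  have piece2 : (1 - Ξ) * Ep / (2 * Ξ) ≤ 3 * E2 / (1 + n ^ 2) := by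
    rw [div_le_div_iff₀ (by linarith : (0:ℝ) < 2 * Ξ) (by positivity)]
    nlinarith [mul_nonneg (mul_nonneg (by linarith : (0:ℝ) ≤ 1 - Ξ)
        (sub_nonneg.2 hEp)) (by positivity : (0:ℝ) ≤ 1 + n ^ 2),
      mul_nonneg (sub_nonneg.2 hcoef) hE2pos.le]
  linarith
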